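/- Let R be a noetherian ring and S_t = { f ∈ R[t] : f(0) ∈ R^× }. Then the Jacobson radical of the localisation R[t]_{S_t} is generated by the Jacobson radical Jac(R) of R together with t; in particular R[t]_{S_t} / Jac(R[t]_{S_t}) ≅ R / Jac(R), and if R is semi-local then so is R[t]_{S_t}. -/

import Mathlib

open Polynomial

/-- A ring is semi-local if its Jacobson radical is the intersection of finitely many maximal
left ideals; equivalently, the quotient by the Jacobson radical is semisimple. -/
def IsSemilocalRing (R : Type*) [Ring R] : Prop :=
  ∃ s : Finset (Ideal R), (∀ I ∈ s, I.IsMaximal) ∧ (⊥ : Ideal R).jacobson = s.inf id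

lemma mem_jacobson_bot_iff' {A : Type*} [Ring A] {x : A} :
    x ∈ (⊥ : Ideal A).jacobson ↔ ∀ y : A, IsUnit (1 + y * x) := by
  constructor
  · intro hx
    have key : ∀ y : A, ∃ z : A, z * (1 + y * x) = 1 := by
      intro y
      obtain ⟨z, hz⟩ := Ideal.mem_jacobson_iff.mp hx y
      rw [Ideal.mem_bot, sub_eq_zero] at hz
      refine ⟨z, ?_⟩
      rw [mul_add, mul_one, ← mul_assoc, add_comm]
      exact hz
    intro y
    obtain ⟨z, hz⟩ := key y
    have hzz : z + z * y * x = 1 := by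
      rw [← hz, mul_add, mul_one, ← mul_assoc]
    have hz' : z = 1 + -(z * y) * x := by
      rw [neg_mul, ← sub_eq_add_neg]
      exact eq_sub_of_add_eq hzz
    obtain ⟨w, hw⟩ := key (-(z * y))
    rw [← hz'] at hw
    have hweq : w = 1 + y * x := by
      calc w = w * (z * (1 + y * x)) := by rw [hz, mul_one]
      _ = w * z * (1 + y * x) := by rw [mul_assoc]
      _ = 1 + y * x := by rw [hw, one_mul]
    exact ⟨⟨1 + y * x, z, by rw [← hweq]; exact hw, hz⟩, rfl⟩
  · intro h
    rw [Ideal.mem_jacobson_iff]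
    intro y
    obtain ⟨u, hu⟩ := h y
    refine ⟨↑u⁻¹, ?_⟩
    rw [Ideal.mem_bot, sub_eq_zero]
    have h1 : (↑u⁻¹ : A) * (1 + y * x) = 1 := by rw [← hu]; exact u.inv_mul
    calc (↑u⁻¹ : A) * y * x + ↑u⁻¹ = ↑u⁻¹ * (1 + y * x) := by
          rw [mul_add, mul_one, mul_assoc, add_comm]
    _ = 1 := h1

lemma jac_bot_mul_mem_right {A : Type*} [Ring A] {x : A} (y : A)
    (h : x ∈ (⊥ : Ideal A).jacobson) : x * y ∈ (⊥ : Ideal A).jacobson :=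
  Ideal.mul_mem_right y _ h

lemma mul_eq_one_symm_of_noetherian {A : Type*} [Ring A] [IsNoetherianRing A] {a b : A}
    (h : a * b = 1) : b * a = 1 := by
  haveI : IsNoetherian A A := isNoetherianRing_iff.mp ‹_›
  let f : A →ₗ[A] A :=
    { toFun := fun x => x * b
      map_add' := fun x y => add_mul x y b
      map_smul' := fun c x => by simp [smul_eq_mul, mul_assoc] }
  have hs : Function.Surjective f := by
    intro x
    refine ⟨x * a, ?_⟩
    show x * a * b = x
    rw [mul_assoc, h, mul_one]
  have hi := IsNoetherian.injective_of_surjective_endomorphism f hs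
  have h0 : f (b * a - 1) = f 0 := by
    show (b * a - 1) * b = 0 * b
    rw [sub_mul, one_mul, mul_assoc, h, mul_one, sub_self, zero_mul]
  have := hi h0
  rwa [sub_eq_zero] at this

def auxM {R T : Type} [Ring R] [Ring T] (ψ : R[X] →+* T)
    (hsurj : ∀ x : T, ∃ r : R, x - ψ (C r) ∈ (⊥ : Ideal T).jacobson)
    (I : Ideal R) : Ideal T where
  carrier := {x | ∃ r ∈ I, x - ψ (C r) ∈ (⊥ : Ideal T).jacobson}
  add_mem' := by
    rintro a b ⟨r1, hr1, h1⟩ ⟨r2, hr2, h2⟩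
    refine ⟨r1 + r2, add_mem hr1 hr2, ?_⟩
    have he : a + b - ψ (C (r1 + r2)) = (a - ψ (C r1)) + (b - ψ (C r2)) := by
      rw [map_add, map_add]; abel
    rw [he]; exact add_mem h1 h2
  zero_mem' := ⟨0, zero_mem _, by simp⟩
  smul_mem' := by
    intro c x hx
    obtain ⟨r, hr, hj⟩ := hx
    obtain ⟨d, hd⟩ := hsurj c
    refine ⟨d * r, Ideal.mul_mem_left I d hr, ?_⟩
    have he : c • x - ψ (C (d * r)) = c * (x - ψ (C r)) + (c - ψ (C d)) * ψ (C r) := by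
      rw [smul_eq_mul, map_mul, map_mul]; noncomm_ring
    rw [he]
    exact add_mem (Ideal.mul_mem_left _ _ hj) (jac_bot_mul_mem_right _ hd)

lemma mem_auxM_iff {R T : Type} [Ring R] [Ring T] {ψ : R[X] →+* T}
    {hsurj : ∀ x : T, ∃ r : R, x - ψ (C r) ∈ (⊥ : Ideal T).jacobson}
    {I : Ideal R} {x : T} :
    x ∈ auxM ψ hsurj I ↔ ∃ r ∈ I, x - ψ (C r) ∈ (⊥ : Ideal T).jacobson := Iff.rfl

/-- For a noetherian ring `R` and a left localisation `ψ : R[t] → T` of `R[t]` at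
`S_t = {f : f(0) ∈ R^×}`, the Jacobson radical of `T` is generated by `Jac(R)` and `t`;
in particular `T / Jac(T) ≅ R / Jac(R)` (the map `R → T/Jac(T)` is surjective with kernel
`Jac(R)`), and if `R` is semi-local then so is `T`. -/
theorem jacobson_of_localization (R : Type) [Ring R] [IsNoetherianRing R]
    (T : Type) [Ring T] (ψ : R[X] →+* T)
    (hinj : Function.Injective ψ)
    (hunit : ∀ f : R[X], IsUnit (f.coeff 0) → IsUnit (ψ f))
    (hloc : ∀ q : T, ∃ (a f : R[X]), IsUnit (f.coeff 0) ∧ ψ f * q = ψ a) :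
    (⊥ : Ideal T).jacobson =
      Ideal.span ((fun r : R => ψ (C r)) '' ((⊥ : Ideal R).jacobson : Set R) ∪ {ψ X}) ∧
    (∀ x : T, ∃ r : R, x - ψ (C r) ∈ (⊥ : Ideal T).jacobson) ∧
    Ideal.comap (ψ.comp (C : R →+* R[X])) ((⊥ : Ideal T).jacobson) = (⊥ : Ideal R).jacobson ∧
    (IsSemilocalRing R → IsSemilocalRing T) := by
  -- cancellation of a unit on the left
  have hiu : ∀ {u v : T}, IsUnit u → IsUnit (u * v) → IsUnit v := by
    intro u v hu huv
    have h1 : v = ↑hu.unit⁻¹ * (u * v) := by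
      rw [← mul_assoc, IsUnit.val_inv_mul, one_mul]
    rw [h1]
    exact (hu.unit⁻¹).isUnit.mul huv
  -- ψ X is in the Jacobson radical of T
  have hX : ψ X ∈ (⊥ : Ideal T).jacobson := by
    rw [mem_jacobson_bot_iff']
    intro q
    obtain ⟨a, f, hf, hfa⟩ := hloc q
    have h1 : ψ f * (1 + q * ψ X) = ψ (f + a * X) := by
      rw [map_add, map_mul, mul_add, mul_one, ← mul_assoc, hfa]
    have h2 : IsUnit (ψ (f + a * X)) :=
      hunit _ (by simpa [Polynomial.mul_coeff_zero] using hf)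
    rw [← h1] at h2
    exact hiu (hunit f hf) h2
  -- constants from Jac(R) are in the Jacobson radical of T
  have hCJ : ∀ r ∈ (⊥ : Ideal R).jacobson, ψ (C r) ∈ (⊥ : Ideal T).jacobson := by
    intro r hr
    rw [mem_jacobson_bot_iff']
    intro q
    obtain ⟨a, f, hf, hfa⟩ := hloc q
    have h1 : ψ f * (1 + q * ψ (C r)) = ψ (f + a * C r) := by
      rw [map_add, map_mul, mul_add, mul_one, ← mul_assoc, hfa]
    obtain ⟨u, hu⟩ := id hf
    have h0 : (f + a * C r).coeff 0 = ↑u * (1 + (↑u⁻¹ * a.coeff 0) * r) := by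
      rw [coeff_add, Polynomial.mul_coeff_zero, coeff_C_zero, ← hu,
        mul_add, mul_one, ← mul_assoc, ← mul_assoc, Units.mul_inv, one_mul]
    have h2 : IsUnit (ψ (f + a * C r)) := by
      apply hunit
      rw [h0]
      exact u.isUnit.mul (mem_jacobson_bot_iff'.mp hr _)
    rw [← h1] at h2
    exact hiu (hunit f hf) h2
  -- units of T pulled back along ψ have unit constant term
  have unit0 : ∀ g : R[X], IsUnit (ψ g) → IsUnit (g.coeff 0) := by
    intro g hg
    obtain ⟨a, f, hf, hfa⟩ := hloc ↑hg.unit⁻¹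
    have h1 : ψ f = ψ (a * g) := by
      have hq : (↑hg.unit⁻¹ : T) * ψ g = 1 := IsUnit.val_inv_mul hg
      calc ψ f = ψ f * (↑hg.unit⁻¹ * ψ g) := by rw [hq, mul_one]
      _ = ψ f * ↑hg.unit⁻¹ * ψ g := by rw [mul_assoc]
      _ = ψ a * ψ g := by rw [hfa]
      _ = ψ (a * g) := (map_mul ψ a g).symm
    have h2 : f = a * g := hinj h1
    have h3 : IsUnit (a.coeff 0 * g.coeff 0) := by
      rw [← Polynomial.mul_coeff_zero, ← h2]; exact hf
    obtain ⟨v, hv⟩ := h3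
    have h4 : (↑v⁻¹ * a.coeff 0) * g.coeff 0 = 1 := by
      rw [mul_assoc, ← hv, Units.inv_mul]
    exact ⟨⟨g.coeff 0, ↑v⁻¹ * a.coeff 0, mul_eq_one_symm_of_noetherian h4, h4⟩, rfl⟩
  -- the comap statement
  have hcomap : Ideal.comap (ψ.comp (C : R →+* R[X])) ((⊥ : Ideal T).jacobson)
      = (⊥ : Ideal R).jacobson := by
    ext r
    simp only [Ideal.mem_comap, RingHom.comp_apply]
    constructor
    · intro hr
      rw [mem_jacobson_bot_iff']
      intro y
      have h1 := mem_jacobson_bot_iff'.mp hr (ψ (C y))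
      have h2 : 1 + ψ (C y) * ψ (C r) = ψ (C (1 + y * r)) := by
        rw [map_add, map_add, map_one, map_one, map_mul, map_mul]
      rw [h2] at h1
      simpa using unit0 _ h1
    · intro hr; exact hCJ r hr
  -- surjectivity modulo the radical
  have hsurj : ∀ x : T, ∃ r : R, x - ψ (C r) ∈ (⊥ : Ideal T).jacobson := by
    intro x
    obtain ⟨a, f, hf, hfa⟩ := hloc x
    obtain ⟨u, hu⟩ := id hf
    refine ⟨↑u⁻¹ * a.coeff 0, ?_⟩
    set g := a - f * C (↑u⁻¹ * a.coeff 0) with hg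
    have hg0 : g.coeff 0 = 0 := by
      rw [hg, coeff_sub, Polynomial.mul_coeff_zero, coeff_C_zero, ← hu,
        ← mul_assoc, Units.mul_inv, one_mul, sub_self]
    have hgJ : ψ g ∈ (⊥ : Ideal T).jacobson := by
      have hgx : g = g.divX * X := by
        conv_lhs => rw [← Polynomial.divX_mul_X_add g]
        rw [hg0, map_zero, add_zero]
      rw [hgx, map_mul]
      exact Ideal.mul_mem_left _ _ hX
    have key : ψ f * (x - ψ (C (↑u⁻¹ * a.coeff 0))) = ψ g := by
      rw [mul_sub, hfa, ← map_mul, ← map_sub]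
    have hfu := hunit f hf
    have hx' : x - ψ (C (↑u⁻¹ * a.coeff 0)) = ↑hfu.unit⁻¹ * ψ g := by
      rw [← key, ← mul_assoc, IsUnit.val_inv_mul, one_mul]
    rw [hx']
    exact Ideal.mul_mem_left _ _ hgJ
  -- the span statement
  have hspan : (⊥ : Ideal T).jacobson =
      Ideal.span ((fun r : R => ψ (C r)) '' ((⊥ : Ideal R).jacobson : Set R) ∪ {ψ X}) := by
    apply le_antisymm
    · intro x hx
      obtain ⟨a, f, hf, hfa⟩ := hloc x
      have haJ : ψ a ∈ (⊥ : Ideal T).jacobson := by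
        rw [← hfa]; exact Ideal.mul_mem_left _ _ hx
      have hdX : ψ a.divX * ψ X ∈ (⊥ : Ideal T).jacobson := Ideal.mul_mem_left _ _ hX
      have ha0 : ψ (C (a.coeff 0)) ∈ (⊥ : Ideal T).jacobson := by
        have he : ψ (C (a.coeff 0)) = ψ a - ψ a.divX * ψ X := by
          rw [← map_mul, ← map_sub]
          congr 1
          exact eq_sub_of_add_eq' (Polynomial.divX_mul_X_add a)
        rw [he]; exact sub_mem haJ hdX
      have ha0' : a.coeff 0 ∈ (⊥ : Ideal R).jacobson := by
        rw [← hcomap]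
        simpa [Ideal.mem_comap] using ha0
      have hfu := hunit f hf
      have hx' : x = (↑hfu.unit⁻¹ * ψ a.divX) * ψ X + ↑hfu.unit⁻¹ * ψ (C (a.coeff 0)) := by
        have h1 : x = ↑hfu.unit⁻¹ * ψ a := by
          rw [← hfa, ← mul_assoc, IsUnit.val_inv_mul, one_mul]
        have h2 : ψ a = ψ a.divX * ψ X + ψ (C (a.coeff 0)) := by
          rw [← map_mul, ← map_add]
          congr 1
          exact (Polynomial.divX_mul_X_add a).symm
        rw [h1, h2, mul_add, ← mul_assoc]
      rw [hx']
      refine add_mem (Ideal.mul_mem_left _ _ ?_) (Ideal.mul_mem_left _ _ ?_)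
      · exact Ideal.subset_span (Set.mem_union_right _ (Set.mem_singleton _))
      · exact Ideal.subset_span (Set.mem_union_left _ ⟨a.coeff 0, ha0', rfl⟩)
    · rw [Ideal.span_le]
      intro x hx
      rcases hx with ⟨r, hr, rfl⟩ | hx
      · exact hCJ r hr
      · rw [Set.mem_singleton_iff] at hx; subst hx; exact hX
  refine ⟨hspan, hsurj, hcomap, ?_⟩
  -- semilocality
  rintro ⟨s, hsmax, hsinf⟩
  classical
  have hJRleI : ∀ I ∈ s, (⊥ : Ideal R).jacobson ≤ I := by
    intro I hI
    rw [hsinf]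
    exact (Finset.inf_le hI : s.inf id ≤ id I)
  have hJacLeM : ∀ I : Ideal R, (⊥ : Ideal T).jacobson ≤ auxM ψ hsurj I := by
    intro I x hx
    exact ⟨0, I.zero_mem, by simpa using hx⟩
  refine ⟨s.image (auxM ψ hsurj), ?_, ?_⟩
  · intro J hJ
    obtain ⟨I, hI, rfl⟩ := Finset.mem_image.mp hJ
    rw [Ideal.isMaximal_def]
    constructor
    · -- proper
      intro htop
      have h1 : (1 : T) ∈ auxM ψ hsurj I := htop ▸ Submodule.mem_top
      obtain ⟨r, hrI, hj⟩ := h1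
      have h2 : (1 : R) - r ∈ (⊥ : Ideal R).jacobson := by
        rw [← hcomap, Ideal.mem_comap]
        have he : (ψ.comp C) ((1 : R) - r) = 1 - ψ (C r) := by
          rw [RingHom.comp_apply, map_sub, map_sub, map_one, map_one]
        rw [he]
        exact hj
      have h3 : (1 : R) ∈ I := by
        have h4 : (1 : R) - r + r ∈ I := add_mem (hJRleI I hI h2) hrI
        simpa using h4
      exact (hsmax I hI).ne_top ((Ideal.eq_top_iff_one I).mpr h3)
    · -- coatom
      intro N hN
      obtain ⟨x, hxN, hxM⟩ := SetLike.exists_of_lt hN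
      obtain ⟨r, hr⟩ := hsurj x
      have hrI : r ∉ I := fun h => hxM ⟨r, h, hr⟩
      have htop : I ⊔ Ideal.span {r} = ⊤ := by
        apply (Ideal.isMaximal_def.mp (hsmax I hI)).2
        apply lt_of_le_of_ne le_sup_left
        intro heq
        apply hrI
        rw [heq]
        exact Submodule.mem_sup_right (Ideal.subset_span rfl)
      have h1 : (1 : R) ∈ I ⊔ Ideal.span {r} := (Ideal.eq_top_iff_one _).mp htop
      obtain ⟨m, hm, z, hz, hmz⟩ := Submodule.mem_sup.mp h1
      obtain ⟨c, hc⟩ := Submodule.mem_span_singleton.mp hz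
      have hmcr : m + c * r = 1 := by
        rw [← smul_eq_mul, hc]; exact hmz
      have hxr : ψ (C c) * x - ψ (C (c * r)) ∈ (⊥ : Ideal T).jacobson := by
        have he : ψ (C c) * x - ψ (C (c * r)) = ψ (C c) * (x - ψ (C r)) := by
          rw [mul_sub, ← map_mul, ← map_mul]
        rw [he]
        exact Ideal.mul_mem_left _ _ hr
      have hone : (1 : T) = ψ (C m) + (ψ (C c) * x - (ψ (C c) * x - ψ (C (c * r)))) := by
        rw [sub_sub_cancel, ← map_add, ← map_add, hmcr, map_one, map_one]
      rw [Ideal.eq_top_iff_one, hone]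
      refine add_mem ?_ (sub_mem (Ideal.mul_mem_left _ _ hxN) ?_)
      · exact hN.le ⟨m, hm, by simp⟩
      · exact hN.le (hJacLeM I hxr)
  · -- the infimum equality
    apply le_antisymm
    · apply Finset.le_inf
      intro J hJ
      obtain ⟨I, hI, rfl⟩ := Finset.mem_image.mp hJ
      exact hJacLeM I
    · intro x hx
      obtain ⟨r, hr⟩ := hsurj x
      have hrJR : r ∈ (⊥ : Ideal R).jacobson := by
        rw [hsinf]
        rw [Submodule.mem_finsetInf]
        intro I hI
        have hxM : x ∈ auxM ψ hsurj I := by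
          have hle := (Finset.inf_le (Finset.mem_image_of_mem (auxM ψ hsurj) hI) :
            (s.image (auxM ψ hsurj)).inf id ≤ _)
          exact hle hx
        obtain ⟨r', hr'I, hj'⟩ := hxM
        have hdiff : r - r' ∈ (⊥ : Ideal R).jacobson := by
          rw [← hcomap, Ideal.mem_comap]
          have he : (ψ.comp C) (r - r') = (x - ψ (C r')) - (x - ψ (C r)) := by
            rw [RingHom.comp_apply, map_sub, map_sub]
            abel
          rw [he]
          exact sub_mem hj' hr
        have h5 : r - r' + r' ∈ (I : Ideal R) := add_mem (hJRleI I hI hdiff) hr'I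
        simpa using h5
      have hx' : x = (x - ψ (C r)) + ψ (C r) := by abel
      rw [hx']
      exact add_mem hr (hCJ r hrJR)
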